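/- Let p ∈ ℂ[X] be a polynomial of degree at most 2 with p(z) ≠ 0 for every z in the closed unit disc {z ∈ ℂ : |z| ≤ 1}. Let F : ℂ → ℂ be a function such that for every z in the closed unit disc, F has complex derivative 1/p(z) at z (i.e. HasDerivAt F (p(z))⁻¹ z). Then F is injective on the closed unit disc. -/

import Mathlib

open Set intervalIntegral MeasureTheory Polynomial


/-- If `h' = f * h` on an open set containing `[0,1]` and `∫₀¹ f = 0`, then `h 1 = h 0`. -/
lemma logB (U : Set ℝ) (hU : IsOpen U) (hsub : Set.Icc (0:ℝ) 1 ⊆ U)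
    (f h : ℝ → ℂ) (hf : ContinuousOn f U)
    (hh : ∀ t ∈ U, HasDerivAt h (f t * h t) t)
    (hint : ∫ t in (0:ℝ)..1, f t = 0) : h 1 = h 0 := by
  set L : ℝ → ℂ := fun u => ∫ t in (0:ℝ)..u, f t with hL
  have hint' : ∀ u ∈ Icc (0:ℝ) 1, IntervalIntegrable f volume 0 u := by
    intro u hu
    apply (hf.mono ?_).intervalIntegrable
    rw [uIcc_of_le hu.1]
    exact fun x hx => hsub ⟨hx.1, hx.2.trans hu.2⟩
  have hLd : ∀ u ∈ Icc (0:ℝ) 1, HasDerivAt L (f u) u := by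
    intro u hu
    exact integral_hasDerivAt_right (hint' u hu)
      (ContinuousOn.stronglyMeasurableAtFilter hU hf u (hsub hu))
      ((hf u (hsub hu)).continuousAt (hU.mem_nhds (hsub hu)))
  set g : ℝ → ℂ := fun u => h u * Complex.exp (-L u) with hg
  have hgd : ∀ u ∈ Icc (0:ℝ) 1, HasDerivAt g 0 u := by
    intro u hu
    have h1 : HasDerivAt (fun u => Complex.exp (-L u)) (-f u * Complex.exp (-L u)) u := by
      have := (((hLd u hu).neg).cexp)
      simpa [mul_comm] using this
    have := (hh u (hsub hu)).mul h1
    convert this using 1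
    · rfl
    · rfl
    ring
  have hcont : ContinuousOn g (Icc 0 1) := fun u hu =>
    ((hgd u hu).continuousAt).continuousWithinAt
  have := constant_of_has_deriv_right_zero hcont
    (fun x hx => ((hgd x ⟨hx.1, hx.2.le⟩).hasDerivWithinAt)) 1 ⟨zero_le_one, le_refl 1⟩
  have hL1 : L 1 = 0 := hint
  have hL0 : L 0 = 0 := by simp [hL]
  simpa [hg, hL1, hL0, Complex.exp_zero] using this

lemma hasDerivAt_inv_comp {g : ℝ → ℂ} {g' : ℂ} {t : ℝ}
    (hg : HasDerivAt g g' t) (hne : g t ≠ 0) :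
    HasDerivAt (fun u => (g u)⁻¹) (-g' / (g t) ^ 2) t := by
  have h := HasDerivAt.scomp (g₁ := fun y : ℂ => y⁻¹) t (hasDerivAt_inv hne) hg
  convert h using 1
  · rfl
  · rfl
  simp [smul_eq_mul]
  ring

lemma integral_inv_poly_ne_zero (p : Polynomial ℂ) (hdeg : p.natDegree ≤ 2)
    (z1 z2 : ℂ) (hw : z2 - z1 ≠ 0)
    (hp : ∀ t ∈ Icc (0:ℝ) 1, p.eval (z1 + t • (z2 - z1)) ≠ 0) :
    (∫ t in (0:ℝ)..1, (p.eval (z1 + t • (z2 - z1)))⁻¹) ≠ 0 := by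
  set w : ℂ := z2 - z1 with hwdef
  set γ : ℝ → ℂ := fun t => z1 + t • w with hγdef
  have hγc : Continuous γ := by continuity
  have hγd : ∀ t : ℝ, HasDerivAt γ w t := by
    intro t
    simpa [hγdef] using ((hasDerivAt_id t).smul_const w).const_add z1
  have hγ0 : γ 0 = z1 := by simp [hγdef]
  have hγ1 : γ 1 = z2 := by simp [hγdef, hwdef]
  set U : Set ℝ := {t | p.eval (γ t) ≠ 0} with hUdef
  have hU : IsOpen U := by
    have : U = (fun t => p.eval (γ t)) ⁻¹' ({0}ᶜ) := rfl
    rw [this]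
    exact (isOpen_compl_singleton).preimage ((p.continuous_aeval).comp hγc)
  have hsub : Icc (0:ℝ) 1 ⊆ U := fun t ht => hp t ht
  have hp0 : p ≠ 0 := by
    intro h0
    exact hp 0 ⟨le_refl 0, zero_le_one⟩ (by simp [h0])
  have hc : p.leadingCoeff ≠ 0 := leadingCoeff_ne_zero.2 hp0
  have hsplit : p.Splits := IsAlgClosed.splits p
  have hcard : Multiset.card p.roots = p.natDegree := splits_iff_card_roots.1 hsplit
  have key : p = C p.leadingCoeff * (p.roots.map fun a => X - C a).prod :=
    hsplit.eq_prod_roots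
  set c := p.leadingCoeff with hcdef
  intro hI
  interval_cases h : p.natDegree
  · -- degree 0
    rw [Multiset.card_eq_zero] at hcard
    rw [hcard] at key
    simp only [Multiset.map_zero, Multiset.prod_zero, mul_one] at key
    rw [key] at hI
    simp [intervalIntegral.integral_const] at hI
    exact hc hI
  · -- degree 1
    obtain ⟨a, ha⟩ := Multiset.card_eq_one.1 hcard
    rw [ha] at key
    simp only [Multiset.map_singleton, Multiset.prod_singleton] at key
    have heval : ∀ z, p.eval z = c * (z - a) := by
      intro z; rw [key]; simp
    have hnea : ∀ t ∈ U, γ t - a ≠ 0 := by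
      intro t ht h0
      exact ht (by rw [heval, h0, mul_zero])
    have h10 : γ 1 - a = γ 0 - a := by
      apply logB U hU hsub (fun t => w * (γ t - a)⁻¹) (fun t => γ t - a)
      · exact continuousOn_const.mul
          (((hγc.continuousOn).sub continuousOn_const).inv₀ hnea)
      · intro t ht
        have hne := hnea t ht
        have := (hγd t).sub_const a
        convert this using 1
        · rfl
        field_simp
      · have heq : (∫ t in (0:ℝ)..1, w * (γ t - a)⁻¹)
            = ∫ t in (0:ℝ)..1, w * c * (p.eval (γ t))⁻¹ := by
          apply intervalIntegral.integral_congr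
          intro t _
          show w * (γ t - a)⁻¹ = w * c * (p.eval (γ t))⁻¹
          rw [heval, mul_inv]
          rw [show w * c * (c⁻¹ * (γ t - a)⁻¹) = w * (c * c⁻¹) * (γ t - a)⁻¹ by ring,
            mul_inv_cancel₀ hc, mul_one]
        rw [heq, intervalIntegral.integral_const_mul, hI, mul_zero]
    rw [hγ1, hγ0, sub_left_inj] at h10
    exact hw (by rw [hwdef, h10, sub_self])
  · -- degree 2
    obtain ⟨a, b, hab'⟩ := Multiset.card_eq_two.1 hcard
    rw [hab'] at key
    have heval : ∀ z, p.eval z = c * ((z - a) * (z - b)) := by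
      intro z; rw [key]; simp [Multiset.prod_cons]
    have hnea : ∀ t ∈ U, γ t - a ≠ 0 := by
      intro t ht h0
      exact ht (by rw [heval, h0, zero_mul, mul_zero])
    have hneb : ∀ t ∈ U, γ t - b ≠ 0 := by
      intro t ht h0
      exact ht (by rw [heval, h0, mul_zero, mul_zero])
    by_cases hab : a = b
    · -- double root: direct antiderivative
      subst hab
      have hIcc : ∀ t ∈ uIcc (0:ℝ) 1, HasDerivAt (fun u => (-(c * w)⁻¹) * (γ u - a)⁻¹)
          ((p.eval (γ t))⁻¹) t := by
        intro t ht
        rw [uIcc_of_le zero_le_one] at ht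
        have hne := hnea t (hsub ht)
        have hd : HasDerivAt (fun u => (γ u - a)⁻¹) (-w / (γ t - a) ^ 2) t :=
          hasDerivAt_inv_comp ((hγd t).sub_const a) hne
        have := hd.const_mul (-(c * w)⁻¹)
        convert this using 1
        · rfl
        rw [heval]
        field_simp
      have hcont : ContinuousOn (fun t => (p.eval (γ t))⁻¹) (uIcc (0:ℝ) 1) := by
        rw [uIcc_of_le zero_le_one]
        exact ((p.continuous_aeval.comp hγc).continuousOn).inv₀ fun t ht => hp t ht
      have hFTC := integral_eq_sub_of_hasDerivAt hIcc hcont.intervalIntegrable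
      rw [hI] at hFTC
      have h3 : -(c * w)⁻¹ * ((γ 1 - a)⁻¹ - (γ 0 - a)⁻¹) = 0 := by
        linear_combination -hFTC
      rcases mul_eq_zero.1 h3 with h' | h'
      · exact (neg_ne_zero.2 (inv_ne_zero (mul_ne_zero hc hw))) h'
      · have h2 : (γ 1 - a) = (γ 0 - a) := inv_inj.1 (sub_eq_zero.1 h')
        rw [hγ1, hγ0, sub_left_inj] at h2
        exact hw (by rw [hwdef, h2, sub_self])
    · -- distinct roots
      have hmain : (γ 1 - b) * (γ 1 - a)⁻¹ = (γ 0 - b) * (γ 0 - a)⁻¹ := by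
        apply logB U hU hsub (fun t => w * (b - a) * c * (p.eval (γ t))⁻¹)
          (fun t => (γ t - b) * (γ t - a)⁻¹)
        · exact continuousOn_const.mul
            (((p.continuous_aeval.comp hγc).continuousOn).inv₀ fun t ht => ht)
        · intro t ht
          have hna := hnea t ht
          have hnb := hneb t ht
          have hd1 : HasDerivAt (fun u => γ u - b) w t := (hγd t).sub_const b
          have hd2 : HasDerivAt (fun u => (γ u - a)⁻¹) (-w / (γ t - a) ^ 2) t :=
            hasDerivAt_inv_comp ((hγd t).sub_const a) hna
          have := hd1.mul hd2
          convert this using 1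
          · rfl
          · rfl
          rw [heval]
          field_simp
          ring
        · rw [intervalIntegral.integral_const_mul, hI, mul_zero]
      rw [hγ1, hγ0] at hmain
      have hz1a : z1 - a ≠ 0 := by
        have := hnea 0 (hsub ⟨le_refl 0, zero_le_one⟩); rwa [hγ0] at this
      have hz2a : z2 - a ≠ 0 := by
        have := hnea 1 (hsub ⟨zero_le_one, le_refl 1⟩); rwa [hγ1] at this
      have hcross : (z2 - b) * (z1 - a) = (z1 - b) * (z2 - a) := by
        field_simp at hmain
        linear_combination hmain
      have hz : (a - b) * (z1 - z2) = 0 := by linear_combination hcross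
      rcases mul_eq_zero.1 hz with h' | h'
      · exact hab (sub_eq_zero.1 h')
      · exact hw (by rw [hwdef, show z1 = z2 from sub_eq_zero.1 h', sub_self])

theorem primitive_of_inv_poly_injOn (p : Polynomial ℂ) (hdeg : p.natDegree ≤ 2)
    (hp : ∀ z ∈ Metric.closedBall (0 : ℂ) 1, p.eval z ≠ 0)
    (F : ℂ → ℂ)
    (hF : ∀ z ∈ Metric.closedBall (0 : ℂ) 1, HasDerivAt F (p.eval z)⁻¹ z) :
    Set.InjOn F (Metric.closedBall (0 : ℂ) 1) := by
  intro z1 hz1 z2 hz2 hFz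
  by_contra hne
  have hw : z2 - z1 ≠ 0 := sub_ne_zero.2 (Ne.symm hne)
  set w : ℂ := z2 - z1 with hwdef
  set γ : ℝ → ℂ := fun t => z1 + t • w with hγdef
  have hmem : ∀ t ∈ Icc (0:ℝ) 1, γ t ∈ Metric.closedBall (0:ℂ) 1 := fun t ht =>
    (convex_closedBall (0:ℂ) 1).add_smul_sub_mem hz1 hz2 ht
  have hγd : ∀ t : ℝ, HasDerivAt γ w t := by
    intro t
    simpa [hγdef] using ((hasDerivAt_id t).smul_const w).const_add z1
  have hγc : Continuous γ := by continuity
  have hderiv : ∀ t ∈ uIcc (0:ℝ) 1,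
      HasDerivAt (F ∘ γ) (w * (p.eval (γ t))⁻¹) t := by
    intro t ht
    rw [uIcc_of_le zero_le_one] at ht
    have := HasDerivAt.scomp (g₁ := F) t (hF (γ t) (hmem t ht)) (hγd t)
    simpa [smul_eq_mul] using this
  have hcont : ContinuousOn (fun t => w * (p.eval (γ t))⁻¹) (uIcc (0:ℝ) 1) := by
    rw [uIcc_of_le zero_le_one]
    exact continuousOn_const.mul
      (((p.continuous_aeval.comp hγc).continuousOn).inv₀
        fun t ht => hp (γ t) (hmem t ht))
  have hFTC := integral_eq_sub_of_hasDerivAt hderiv hcont.intervalIntegrable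
  have hγ0 : γ 0 = z1 := by simp [hγdef]
  have hγ1 : γ 1 = z2 := by simp [hγdef, hwdef]
  rw [Function.comp_apply, Function.comp_apply, hγ0, hγ1, hFz, sub_self] at hFTC
  rw [intervalIntegral.integral_const_mul] at hFTC
  rcases mul_eq_zero.1 hFTC with h' | h'
  · exact hw h'
  · exact integral_inv_poly_ne_zero p hdeg z1 z2 hw
      (fun t ht => hp (z1 + t • (z2 - z1)) (hmem t ht)) h'
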